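/- Let X be a CAT(0) metric space, let R, δ, ε > 0 be real numbers and set k = δ/ε + 1. Let r : [0, ∞) → X be a geodesic ray, let t ∈ [0, δ], and let x ∈ X be a point with d(x, r(t + kR)) ≤ R. Then every geodesic σ : [0,1] → X from r(0) to x meets the open ball of radius ε around r(t): there exists s ∈ [0,1] with d(σ(s), r(t)) < ε. -/

import Mathlib

open Metric Real

/-- A geodesic from `x` to `y`, parametrized affinely on `[0,1]`. -/
def IsGeodesic {X : Type*} [MetricSpace X] (σ : ℝ → X) (x y : X) : Prop :=
  σ 0 = x ∧ σ 1 = y ∧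
    ∀ s ∈ Set.Icc (0:ℝ) 1, ∀ t ∈ Set.Icc (0:ℝ) 1,
      dist (σ s) (σ t) = |s - t| * dist x y

/-- A geodesic space: every pair of points is joined by a geodesic. -/
def GeodesicMetricSpace (X : Type*) [MetricSpace X] : Prop :=
  ∀ x y : X, ∃ σ : ℝ → X, IsGeodesic σ x y

/-- The comparison point at parameter `s` on the Euclidean segment from `p` to `q`. -/
noncomputable def cmpPt (p q : EuclideanSpace ℝ (Fin 2)) (s : ℝ) : EuclideanSpace ℝ (Fin 2) :=
  p + s • (q - p)

/-- A CAT(0) space: a geodesic space in which every geodesic triangle satisfies the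
CAT(0) comparison inequality with respect to the Euclidean plane. -/
def IsCAT0 (X : Type*) [MetricSpace X] : Prop :=
  GeodesicMetricSpace X ∧
    ∀ (p q r : X) (σpq σqr σrp : ℝ → X),
      IsGeodesic σpq p q → IsGeodesic σqr q r → IsGeodesic σrp r p →
      ∀ p' q' r' : EuclideanSpace ℝ (Fin 2),
        dist p' q' = dist p q → dist q' r' = dist q r → dist r' p' = dist r p →
        ∀ (i j : Fin 3), ∀ s ∈ Set.Icc (0:ℝ) 1, ∀ t ∈ Set.Icc (0:ℝ) 1,
          dist (![σpq, σqr, σrp] i s) (![σpq, σqr, σrp] j t) ≤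
            dist (![cmpPt p' q', cmpPt q' r', cmpPt r' p'] i s)
                 (![cmpPt p' q', cmpPt q' r', cmpPt r' p'] j t)

/-- `z` is a CAT(-1) point of radius `c > 0`: every geodesic triangle contained in the
open ball `B(z, c)` admits a comparison triangle in the hyperbolic plane `ℍ²` (the upper
half-plane) for which the CAT(-1) comparison inequality holds. -/
def IsCATm1Point {X : Type*} [MetricSpace X] (z : X) (c : ℝ) : Prop :=
  0 < c ∧
    ∀ (p q r : X) (σpq σqr σrp : ℝ → X),
      IsGeodesic σpq p q → IsGeodesic σqr q r → IsGeodesic σrp r p →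
      (∀ s ∈ Set.Icc (0:ℝ) 1, σpq s ∈ Metric.ball z c) →
      (∀ s ∈ Set.Icc (0:ℝ) 1, σqr s ∈ Metric.ball z c) →
      (∀ s ∈ Set.Icc (0:ℝ) 1, σrp s ∈ Metric.ball z c) →
      ∃ (p' q' r' : UpperHalfPlane) (τpq τqr τrp : ℝ → UpperHalfPlane),
        IsGeodesic τpq p' q' ∧ IsGeodesic τqr q' r' ∧ IsGeodesic τrp r' p' ∧
        dist p' q' = dist p q ∧ dist q' r' = dist q r ∧ dist r' p' = dist r p ∧
        ∀ (i j : Fin 3), ∀ s ∈ Set.Icc (0:ℝ) 1, ∀ t ∈ Set.Icc (0:ℝ) 1,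
          dist (![σpq, σqr, σrp] i s) (![σpq, σqr, σrp] j t) ≤
            dist (![τpq, τqr, τrp] i s) (![τpq, τqr, τrp] j t)

/-- A geodesic ray: an isometric embedding of `[0, ∞)`. -/
def IsGeodesicRay {X : Type*} [MetricSpace X] (r : ℝ → X) : Prop :=
  ∀ s t : ℝ, 0 ≤ s → 0 ≤ t → dist (r s) (r t) = |s - t|

/-- A geodesic line: an isometric embedding of `ℝ`. -/
def IsGeodesicLine {X : Type*} [MetricSpace X] (γ : ℝ → X) : Prop :=
  ∀ s t : ℝ, dist (γ s) (γ t) = |s - t|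

/-- Geodesic completeness: every nondegenerate geodesic segment extends to a geodesic line. -/
def GeodesicallyComplete (X : Type*) [MetricSpace X] : Prop :=
  ∀ (x y : X) (σ : ℝ → X), IsGeodesic σ x y → x ≠ y →
    ∃ γ : ℝ → X, IsGeodesicLine γ ∧ ∀ s ∈ Set.Icc (0:ℝ) 1, σ s = γ (s * dist x y)

/-- Cocompactness: some compact set meets every orbit of the isometry group. -/
def Cocompact (X : Type*) [MetricSpace X] : Prop :=
  ∃ K : Set X, IsCompact K ∧ ∀ x : X, ∃ g : X ≃ᵢ X, g x ∈ K

/-- The set of projections of a point `u` onto a subset `Y`. -/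
def projSet {X : Type*} [MetricSpace X] (Y : Set X) (u : X) : Set X :=
  {p ∈ Y | dist u p = Metric.infDist u Y}

/-- `Y` is `B`-contracting: projections of balls disjoint from `Y` have diameter at most `B`. -/
def IsContracting {X : Type*} [MetricSpace X] (Y : Set X) (B : ℝ) : Prop :=
  0 ≤ B ∧
    ∀ (u : X) (ρ : ℝ), Disjoint (Metric.ball u ρ) Y →
      ∀ p q : X, (∃ v ∈ Metric.ball u ρ, p ∈ projSet Y v) →
        (∃ v ∈ Metric.ball u ρ, q ∈ projSet Y v) → dist p q ≤ B

lemma exists_cmp_triangle (a b c : ℝ) (ha : 0 < a) (hc : 0 ≤ c)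
    (h1 : b ≤ a + c) (h2 : c ≤ a + b) (h3 : a ≤ b + c) :
    ∃ p q r : EuclideanSpace ℝ (Fin 2),
      dist p q = a ∧ dist q r = b ∧ dist r p = c := by
  have hb : 0 ≤ b := by nlinarith
  set x0 : ℝ := (a ^ 2 + c ^ 2 - b ^ 2) / (2 * a) with hx0
  have hy2 : 0 ≤ c ^ 2 - x0 ^ 2 := by
    have : c ^ 2 - x0 ^ 2 = ((a + c - b) * (a + c + b) * (b - a + c) * (b + a - c)) / (4 * a ^ 2) := by
      rw [hx0]; field_simp; ring
    rw [this]
    apply div_nonneg _ (by positivity)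
    have h1' : 0 ≤ a + c - b := by linarith
    have h2' : 0 ≤ b - a + c := by linarith
    have h3' : 0 ≤ b + a - c := by linarith
    have h4' : 0 ≤ a + c + b := by linarith
    positivity
  set y0 : ℝ := Real.sqrt (c ^ 2 - x0 ^ 2) with hy0
  have hy0sq : y0 ^ 2 = c ^ 2 - x0 ^ 2 := Real.sq_sqrt hy2
  refine ⟨!₂[0, 0], !₂[a, 0], !₂[x0, y0], ?_, ?_, ?_⟩
  · rw [EuclideanSpace.dist_eq]
    simp only [PiLp.toLp_apply, Fin.sum_univ_two, Matrix.cons_val_zero, Matrix.cons_val_one, Matrix.head_cons,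
      Real.dist_eq, sq_abs]
    rw [show (0 - a) ^ 2 + (0-0:ℝ) ^ 2 = a ^ 2 by ring]
    exact Real.sqrt_sq ha.le
  · rw [EuclideanSpace.dist_eq]
    simp only [PiLp.toLp_apply, Fin.sum_univ_two, Matrix.cons_val_zero, Matrix.cons_val_one, Matrix.head_cons,
      Real.dist_eq, sq_abs]
    rw [show (a - x0) ^ 2 + (0 - y0) ^ 2 = a^2 - 2*a*x0 + x0^2 + y0^2 by ring, hy0sq]
    rw [show a ^ 2 - 2 * a * x0 + x0 ^ 2 + (c ^ 2 - x0 ^ 2) = b ^ 2 by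
      rw [hx0]; field_simp; ring]
    exact Real.sqrt_sq hb
  · rw [EuclideanSpace.dist_eq]
    simp only [PiLp.toLp_apply, Fin.sum_univ_two, Matrix.cons_val_zero, Matrix.cons_val_one, Matrix.head_cons,
      Real.dist_eq, sq_abs]
    rw [show (x0 - 0) ^ 2 + (y0 - 0) ^ 2 = x0^2 + y0^2 by ring, hy0sq]
    rw [show x0 ^ 2 + (c ^ 2 - x0 ^ 2) = c ^ 2 by ring]
    exact Real.sqrt_sq hc

lemma cmpPt_dist (p q r : EuclideanSpace ℝ (Fin 2)) (s : ℝ) (hs : 0 ≤ s) :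
    dist (cmpPt p q s) (cmpPt r p (1 - s)) = s * dist q r := by
  unfold cmpPt
  rw [dist_eq_norm]
  have h : (p + s • (q - p)) - (r + (1 - s) • (p - r)) = s • (q - r) := by module
  rw [h, norm_smul, Real.norm_eq_abs, abs_of_nonneg hs, dist_eq_norm]

/-- first unnamed lemma in the proof of Proposition 3.2. In a CAT(0)
space, any geodesic from `r 0` to a point `x` at distance at most `R` from `r (t + k·R)`,
where `k = δ/ε + 1` and `t ∈ [0, δ]`, meets the open ball of radius `ε` around `r t`. -/
theorem geodesic_meets_ball_along_ray
    (X : Type*) [MetricSpace X] (hCAT0 : IsCAT0 X)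
    (R δ ε : ℝ) (hR : 0 < R) (hδ : 0 < δ) (hε : 0 < ε)
    (k : ℝ) (hk : k = δ / ε + 1)
    (r : ℝ → X) (hr : IsGeodesicRay r)
    (t : ℝ) (ht : t ∈ Set.Icc 0 δ)
    (x : X) (hx : dist x (r (t + k * R)) ≤ R)
    (σ : ℝ → X) (hσ : IsGeodesic σ (r 0) x) :
    ∃ s ∈ Set.Icc (0:ℝ) 1, dist (σ s) (r t) < ε := by
  obtain ⟨ht0, htδ⟩ := ht
  have hk1 : 1 < k := by
    rw [hk]; have : 0 < δ / ε := div_pos hδ hε; linarith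
  set T : ℝ := t + k * R with hT
  have hTpos : 0 < T := by nlinarith
  have hRT : R < T := by nlinarith
  set y : X := r T with hy
  -- distances
  set a : ℝ := dist (r 0) x with haa
  set b : ℝ := dist x y with hbb
  have hcT : dist y (r 0) = T := by
    rw [hy, hr T 0 hTpos.le le_rfl]; rw [abs_of_nonneg (by linarith)]; ring_nf
  have hbR : b ≤ R := by rw [hbb, hy]; exact hx
  have hb0 : 0 ≤ b := dist_nonneg
  have ha_pos : 0 < a := by
    have := dist_triangle y x (r 0)
    rw [hcT, dist_comm y x, ← hbb, dist_comm x (r 0), ← haa] at this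
    nlinarith
  -- triangle inequalities
  have htri1 : b ≤ a + T := by
    have := dist_triangle x (r 0) y
    rw [dist_comm x (r 0), ← haa, ← hbb, dist_comm (r 0) y, hcT] at this
    linarith [dist_triangle x (r 0) y]
  have htri2 : T ≤ a + b := by
    have := dist_triangle y x (r 0)
    rw [hcT, dist_comm y x, ← hbb, dist_comm x (r 0), ← haa] at this; linarith
  have htri3 : a ≤ b + T := by
    have h := dist_triangle (r 0) y x
    rw [dist_comm (r 0) y, hcT, dist_comm y x, ← hbb, ← haa] at h
    linarith
  obtain ⟨p', q', r', hpq', hqr', hrp'⟩ :=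
    exists_cmp_triangle a b T ha_pos hTpos.le htri1 htri2 htri3
  -- geodesics
  obtain ⟨σqr, hσqr⟩ := hCAT0.1 x y
  set σrp : ℝ → X := fun s => r ((1 - s) * T) with hσrp_def
  have hσrp : IsGeodesic σrp y (r 0) := by
    refine ⟨by simp [hσrp_def, hy], by simp [hσrp_def], ?_⟩
    intro s hs u hu
    rw [hσrp_def]
    simp only
    rw [hr _ _ (by nlinarith [hs.1, hs.2] : (0:ℝ) ≤ (1 - s) * T)
      (by nlinarith [hu.1, hu.2] : (0:ℝ) ≤ (1 - u) * T), hcT]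
    rw [show (1 - s) * T - (1 - u) * T = (u - s) * T by ring, abs_mul,
      abs_of_nonneg hTpos.le, abs_sub_comm]
  -- parameter
  set s0 : ℝ := t / T with hs0
  have hs0mem : s0 ∈ Set.Icc (0:ℝ) 1 := by
    constructor
    · exact div_nonneg ht0 hTpos.le
    · rw [hs0, div_le_one hTpos]; nlinarith
  have hs1mem : (1 - s0) ∈ Set.Icc (0:ℝ) 1 := by
    constructor <;> [linarith [hs0mem.2]; linarith [hs0mem.1]]
  -- apply CAT(0)
  have hcomp := hCAT0.2 (r 0) x y σ σqr σrp hσ hσqr hσrp p' q' r'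
    (by rw [hpq', haa]) (by rw [hqr', hbb])
    (by rw [hrp', hcT])
    0 2 s0 hs0mem (1 - s0) hs1mem
  simp only [Matrix.cons_val_zero, Matrix.cons_val_two, Matrix.tail_cons, Matrix.head_cons] at hcomp
  have hσrp_val : σrp (1 - s0) = r t := by
    rw [hσrp_def]; simp only
    congr 1
    rw [hs0]; field_simp; ring
  rw [hσrp_val, cmpPt_dist p' q' r' s0 hs0mem.1, hqr'] at hcomp
  refine ⟨s0, hs0mem, lt_of_le_of_lt hcomp ?_⟩
  -- s0 * b < ε
  have h1 : s0 * b ≤ s0 * R := by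
    apply mul_le_mul_of_nonneg_left hbR hs0mem.1
  have h2 : s0 * R < ε := by
    rw [hs0, div_mul_eq_mul_div, div_lt_iff₀ hTpos, hT, hk]
    have hδε : δ / ε * ε = δ := by field_simp
    nlinarith [mul_pos hε hR, mul_nonneg hε.le ht0]
  linarith
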